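/- The split Cayley algebra C over k, with basis {e₁,e₂,u₀,u₁,u₂,v₀,v₁,v₂} and multiplication given by the standard split multiplication table, admits a group homomorphism from the symmetric group S₄ into Aut(C) determined by: e₁ and e₂ are fixed; τ₁ = (12)(34) sends u₀↦u₀, u₁↦−u₁, u₂↦−u₂ (similarly on v's); τ₂ = (23)(14) sends u₀↦−u₀, u₁↦u₁, u₂↦−u₂ (similarly on v's); φ = (123) sends uᵢ↦u_{i+1}, vᵢ↦v_{i+1} (indices mod 3); τ = (12) sends u₀↦−u₀, u₁↦−u₂, u₂↦−u₁ (similarly on v's). -/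

import Mathlib

section SplitCayleyAux

lemma zmod3_sum {M : Type*} [AddCommMonoid M] (f : ZMod 3 → M) :
    ∑ i : ZMod 3, f i = f 0 + f 1 + f 2 := Fin.sum_univ_three f

lemma zmod3_cases (P : ZMod 3 → Prop) (h0 : P 0) (h1 : P 1) (h2 : P 2) (i : ZMod 3) : P i := by
  have h : i = 0 ∨ i = 1 ∨ i = 2 := by revert i; decide
  rcases h with h | h | h <;> subst h <;> assumption

lemma fin8_cases (P : Fin 8 → Prop) (h0 : P 0) (h1 : P 1) (h2 : P 2) (h3 : P 3)
    (h4 : P 4) (h5 : P 5) (h6 : P 6) (h7 : P 7) : ∀ j, P j := by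
  intro j
  fin_cases j
  · exact h0
  · exact h1
  · exact h2
  · exact h3
  · exact h4
  · exact h5
  · exact h6
  · exact h7

def cf (k : Type*) [Field k] (i : ZMod 3) : Fin 4 → k :=
  if i = 0 then ![1,1,-1,-1] else if i = 1 then ![-1,1,1,-1] else ![1,-1,1,-1]

lemma cf_rowsum (k : Type*) [Field k] (i : ZMod 3) : ∑ a : Fin 4, cf k i a = 0 := by
  induction i using zmod3_cases <;>
    simp (config := { decide := true }) [cf, Fin.sum_univ_four]

lemma cf_row (k : Type*) [Field k] (i j : ZMod 3) :
    ∑ a : Fin 4, cf k i a * cf k j a = if i = j then (4:k) else 0 := by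
  induction i using zmod3_cases <;> induction j using zmod3_cases <;>
    simp (config := { decide := true }) [cf, Fin.sum_univ_four] <;> norm_num

lemma cf_col (k : Type*) [Field k] (a b : Fin 4) :
    ∑ i : ZMod 3, cf k i a * cf k i b = if a = b then (3:k) else -1 := by
  rw [zmod3_sum]
  fin_cases a <;> fin_cases b <;>
    simp (config := { decide := true }) [cf] <;> norm_num

section PV
variable (k : Type*) [Field k] {C : Type*} [AddCommGroup C] [Module k C]

def Pv (u : ZMod 3 → C) (a : Fin 4) : C := ∑ i : ZMod 3, cf k i a • u i

lemma Pv_expand (u : ZMod 3 → C) (a : Fin 4) :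
    Pv k u a = cf k 0 a • u 0 + cf k 1 a • u 1 + cf k 2 a • u 2 := zmod3_sum _

lemma Pv_total (u : ZMod 3 → C) : ∑ a : Fin 4, Pv k u a = 0 := by
  unfold Pv
  rw [Finset.sum_comm]
  simp only [← Finset.sum_smul, cf_rowsum, zero_smul, Finset.sum_const_zero]

def sg (σ : Equiv.Perm (Fin 4)) : k := ((Equiv.Perm.sign σ : ℤ) : k)

lemma sg_mul (σ σ' : Equiv.Perm (Fin 4)) : sg k (σ * σ') = sg k σ * sg k σ' := by
  simp [sg]

lemma sg_one : sg k (1 : Equiv.Perm (Fin 4)) = 1 := by simp [sg]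

def wv (u : ZMod 3 → C) (σ : Equiv.Perm (Fin 4)) (i : ZMod 3) : C :=
  ((4:k)⁻¹ * sg k σ) • ∑ a : Fin 4, cf k i a • Pv k u (σ a)

lemma smul_cancel4 (hk4 : (4:k) ≠ 0) {x y : C} (h : (4:k) • x = (4:k) • y) : x = y := by
  have := congrArg (fun z => (4:k)⁻¹ • z) h
  simpa [smul_smul, inv_mul_cancel₀ hk4] using this

lemma u_eq (hk4 : (4:k) ≠ 0) (u : ZMod 3 → C) (i : ZMod 3) :
    (4:k)⁻¹ • ∑ a : Fin 4, cf k i a • Pv k u a = u i := by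
  have h : ∑ a : Fin 4, cf k i a • Pv k u a = (4:k) • u i := by
    unfold Pv
    simp only [Finset.smul_sum, smul_smul]
    rw [Finset.sum_comm]
    simp only [← Finset.sum_smul, cf_row]
    rw [zmod3_sum]
    induction i using zmod3_cases <;>
      simp (config := { decide := true })
  rw [h, smul_smul, inv_mul_cancel₀ hk4, one_smul]

lemma sum_if_smul (b : Fin 4) (g : Fin 4 → C) :
    ∑ a : Fin 4, (if b = a then (3:k) else -1) • g a = (4:k) • g b - ∑ a : Fin 4, g a := by
  have h : ∀ a : Fin 4, (if b = a then (3:k) else -1) • g a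
      = (if b = a then (4:k) • g a else 0) - g a := by
    intro a
    by_cases hba : b = a
    · rw [if_pos hba, if_pos hba, show (3:k) = 4 - 1 by norm_num, sub_smul, one_smul]
    · rw [if_neg hba, if_neg hba, neg_one_smul, zero_sub]
  rw [Finset.sum_congr rfl (fun a _ => h a), Finset.sum_sub_distrib]
  congr 1
  simp

lemma wv_one (hk4 : (4:k) ≠ 0) (u : ZMod 3 → C) (i : ZMod 3) :
    wv k u 1 i = u i := by
  unfold wv
  rw [sg_one, mul_one]
  simp only [Equiv.Perm.one_apply]
  rw [← u_eq k hk4 u i]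

lemma Pv_transform (hk4 : (4:k) ≠ 0) (u : ZMod 3 → C) (σ : Equiv.Perm (Fin 4))
    (f : C →ₗ[k] C) (hf : ∀ i, f (u i) = wv k u σ i) (b : Fin 4) :
    f (Pv k u b) = sg k σ • Pv k u (σ b) := by
  have h1 : ∀ i, cf k i b • wv k u σ i
      = ((4:k)⁻¹ * sg k σ) • ∑ a : Fin 4, (cf k i b * cf k i a) • Pv k u (σ a) := by
    intro i
    unfold wv
    rw [smul_comm]
    congr 1
    rw [Finset.smul_sum]
    simp only [smul_smul]
  calc f (Pv k u b) = ∑ i : ZMod 3, cf k i b • f (u i) := by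
        unfold Pv; rw [map_sum]; simp only [map_smul]
    _ = ((4:k)⁻¹ * sg k σ) • ∑ i : ZMod 3, ∑ a : Fin 4, (cf k i b * cf k i a) • Pv k u (σ a) := by
        simp only [hf, h1, Finset.smul_sum]
    _ = ((4:k)⁻¹ * sg k σ) • ∑ a : Fin 4, (if b = a then (3:k) else -1) • Pv k u (σ a) := by
        rw [Finset.sum_comm]
        simp only [← Finset.sum_smul, cf_col]
    _ = ((4:k)⁻¹ * sg k σ) • ((4:k) • Pv k u (σ b) - ∑ a : Fin 4, Pv k u (σ a)) := by
        rw [sum_if_smul]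
    _ = ((4:k)⁻¹ * sg k σ) • ((4:k) • Pv k u (σ b)) := by
        rw [Equiv.sum_comp σ (Pv k u), Pv_total, sub_zero]
    _ = sg k σ • Pv k u (σ b) := by
        rw [smul_smul, mul_comm, ← mul_assoc, mul_inv_cancel₀ hk4, one_mul]

lemma wv_comp (hk4 : (4:k) ≠ 0) (u : ZMod 3 → C) (σ σ' : Equiv.Perm (Fin 4))
    (f : C →ₗ[k] C) (hf : ∀ i, f (u i) = wv k u σ i) (i : ZMod 3) :
    f (wv k u σ' i) = wv k u (σ * σ') i := by
  unfold wv
  rw [map_smul, map_sum]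
  simp only [map_smul, Pv_transform k hk4 u σ f hf]
  simp only [Equiv.Perm.mul_apply, sg_mul]
  simp only [smul_comm (cf k i _) (sg k σ), ← Finset.smul_sum]
  module

lemma sg_eq_one {k : Type*} [Field k] {σ : Equiv.Perm (Fin 4)}
    (h : Equiv.Perm.sign σ = 1) : sg k σ = 1 := by
  unfold sg; rw [h]; norm_num

lemma sg_eq_neg_one {k : Type*} [Field k] {σ : Equiv.Perm (Fin 4)}
    (h : Equiv.Perm.sign σ = -1) : sg k σ = -1 := by
  unfold sg; rw [h]; norm_num

lemma wv_eval (hk4 : (4:k) ≠ 0) (u : ZMod 3 → C) (σ : Equiv.Perm (Fin 4)) (i : ZMod 3)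
    (s : k) (hs : sg k σ = s) (b0 b1 b2 b3 : Fin 4)
    (h0 : σ 0 = b0) (h1 : σ 1 = b1) (h2 : σ 2 = b2) (h3 : σ 3 = b3) (target : C)
    (ht : s • (cf k i 0 • Pv k u b0 + cf k i 1 • Pv k u b1
        + cf k i 2 • Pv k u b2 + cf k i 3 • Pv k u b3) = (4:k) • target) :
    wv k u σ i = target := by
  unfold wv
  apply smul_cancel4 k hk4
  rw [hs, smul_smul, ← mul_assoc, mul_inv_cancel₀ hk4, one_mul,
    Fin.sum_univ_four, h0, h1, h2, h3]
  exact ht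

end PV

lemma mul_ext {k : Type*} [Field k] {C : Type*} [NonAssocRing C] [Module k C]
    [SMulCommClass k C C] [IsScalarTower k C C]
    (f : C →ₗ[k] C) {n : ℕ} (w : Fin n → C)
    (hspan : Submodule.span k (Set.range w) = ⊤)
    (h : ∀ i j, f (w i * w j) = f (w i) * f (w j)) :
    ∀ a b : C, f (a * b) = f a * f b := by
  have mem : ∀ x : C, x ∈ Submodule.span k (Set.range w) := fun x => by
    rw [hspan]; exact Submodule.mem_top
  have key : ∀ (j : Fin n) (a : C), f (a * w j) = f a * f (w j) := by
    intro j a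
    induction mem a using Submodule.span_induction with
    | mem x hx => obtain ⟨i, rfl⟩ := hx; exact h i j
    | zero => simp
    | add x y hx hy ihx ihy => rw [add_mul, map_add, ihx, ihy, map_add, add_mul]
    | smul r x hx ih => rw [smul_mul_assoc, map_smul, ih, map_smul, smul_mul_assoc]
  intro a b
  induction mem b using Submodule.span_induction with
  | mem x hx => obtain ⟨j, rfl⟩ := hx; exact key j a
  | zero => simp
  | add x y hx hy ihx ihy => rw [mul_add, map_add, ihx, ihy, map_add, mul_add]
  | smul r x hx ih => rw [mul_smul_comm, map_smul, ih, map_smul, mul_smul_comm]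

end SplitCayleyAux

set_option maxHeartbeats 4000000 in
/-- The split Cayley algebra `C` over `k`, with basis
`{e₁,e₂,u₀,u₁,u₂,v₀,v₁,v₂}` and the standard split multiplication table, admits a
group homomorphism from the symmetric group `S₄` into `Aut(C)` determined by:
`e₁`, `e₂` are fixed by every element; `τ₁ = (12)(34)`, `τ₂ = (23)(14)`,
`φ = (123)`, `τ = (12)` act on the `uᵢ`'s and `vᵢ`'s by the signed permutations
described in the paper. -/
theorem splitCayley_S4_action
    (k : Type*) [Field k] (hk2 : (2 : k) ≠ 0) (hk3 : (3 : k) ≠ 0)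
    (C : Type*) [NonAssocRing C] [Module k C]
    [SMulCommClass k C C] [IsScalarTower k C C]
    (e1 e2 : C) (u v : ZMod 3 → C)
    -- the standard split multiplication table
    (he1 : e1 * e1 = e1) (he2 : e2 * e2 = e2) (he12 : e1 * e2 = 0) (he21 : e2 * e1 = 0)
    (he1u : ∀ i, e1 * u i = u i) (hue2 : ∀ i, u i * e2 = u i)
    (he2v : ∀ i, e2 * v i = v i) (hve1 : ∀ i, v i * e1 = v i)
    (he2u : ∀ i, e2 * u i = 0) (hue1 : ∀ i, u i * e1 = 0)
    (he1v : ∀ i, e1 * v i = 0) (hve2 : ∀ i, v i * e2 = 0)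
    (huu : ∀ i, u i * u (i + 1) = v (i + 2)) (huu' : ∀ i, u (i + 1) * u i = - v (i + 2))
    (hvv : ∀ i, v i * v (i + 1) = u (i + 2)) (hvv' : ∀ i, v (i + 1) * v i = - u (i + 2))
    (husq : ∀ i, u i * u i = 0) (hvsq : ∀ i, v i * v i = 0)
    (huv : ∀ i j, u i * v j = if i = j then -e1 else 0)
    (hvu : ∀ i j, v i * u j = if i = j then -e2 else 0)
    -- `{e₁,e₂,u₀,u₁,u₂,v₀,v₁,v₂}` is a basis of `C`
    (hindep : LinearIndependent k ![e1, e2, u 0, u 1, u 2, v 0, v 1, v 2])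
    (hspan : Submodule.span k (Set.range ![e1, e2, u 0, u 1, u 2, v 0, v 1, v 2]) = ⊤) :
    ∃ ρ : Equiv.Perm (Fin 4) →* (C ≃ₗ[k] C),
      (∀ σ : Equiv.Perm (Fin 4), ∀ a b : C, ρ σ (a * b) = ρ σ a * ρ σ b) ∧
      (∀ σ : Equiv.Perm (Fin 4), ρ σ e1 = e1 ∧ ρ σ e2 = e2) ∧
      -- τ₁ = (12)(34)
      (ρ (Equiv.swap (0 : Fin 4) 1 * Equiv.swap 2 3) (u 0) = u 0 ∧
       ρ (Equiv.swap (0 : Fin 4) 1 * Equiv.swap 2 3) (u 1) = - u 1 ∧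
       ρ (Equiv.swap (0 : Fin 4) 1 * Equiv.swap 2 3) (u 2) = - u 2 ∧
       ρ (Equiv.swap (0 : Fin 4) 1 * Equiv.swap 2 3) (v 0) = v 0 ∧
       ρ (Equiv.swap (0 : Fin 4) 1 * Equiv.swap 2 3) (v 1) = - v 1 ∧
       ρ (Equiv.swap (0 : Fin 4) 1 * Equiv.swap 2 3) (v 2) = - v 2) ∧
      -- τ₂ = (23)(14)
      (ρ (Equiv.swap (1 : Fin 4) 2 * Equiv.swap 0 3) (u 0) = - u 0 ∧
       ρ (Equiv.swap (1 : Fin 4) 2 * Equiv.swap 0 3) (u 1) = u 1 ∧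
       ρ (Equiv.swap (1 : Fin 4) 2 * Equiv.swap 0 3) (u 2) = - u 2 ∧
       ρ (Equiv.swap (1 : Fin 4) 2 * Equiv.swap 0 3) (v 0) = - v 0 ∧
       ρ (Equiv.swap (1 : Fin 4) 2 * Equiv.swap 0 3) (v 1) = v 1 ∧
       ρ (Equiv.swap (1 : Fin 4) 2 * Equiv.swap 0 3) (v 2) = - v 2) ∧
      -- φ = (123)
      (∀ i, ρ (Equiv.swap (0 : Fin 4) 2 * Equiv.swap 0 1) (u i) = u (i + 1) ∧
            ρ (Equiv.swap (0 : Fin 4) 2 * Equiv.swap 0 1) (v i) = v (i + 1)) ∧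
      -- τ = (12)
      (ρ (Equiv.swap (0 : Fin 4) 1) (u 0) = - u 0 ∧
       ρ (Equiv.swap (0 : Fin 4) 1) (u 1) = - u 2 ∧
       ρ (Equiv.swap (0 : Fin 4) 1) (u 2) = - u 1 ∧
       ρ (Equiv.swap (0 : Fin 4) 1) (v 0) = - v 0 ∧
       ρ (Equiv.swap (0 : Fin 4) 1) (v 1) = - v 2 ∧
       ρ (Equiv.swap (0 : Fin 4) 1) (v 2) = - v 1) := by
  
  classical
  have hk4 : (4:k) ≠ 0 := by
    have h := mul_ne_zero hk2 hk2
    rwa [show (2:k)*2 = 4 by norm_num] at h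
  let B : Module.Basis (Fin 8) k C := Module.Basis.mk hindep (le_of_eq hspan.symm)
  have hB : ∀ j, B j = ![e1, e2, u 0, u 1, u 2, v 0, v 1, v 2] j :=
    fun j => Module.Basis.mk_apply _ _ j
  let tv : Equiv.Perm (Fin 4) → Fin 8 → C := fun σ =>
    ![e1, e2, wv k u σ 0, wv k u σ 1, wv k u σ 2, wv k v σ 0, wv k v σ 1, wv k v σ 2]
  let r0 : Equiv.Perm (Fin 4) → (C →ₗ[k] C) := fun σ => B.constr k (tv σ)
  have hr0 : ∀ σ j, r0 σ (B j) = tv σ j := fun σ j => B.constr_basis k (tv σ) j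
  have hre1 : ∀ σ, r0 σ e1 = e1 := fun σ => by
    have h := hr0 σ 0; rw [hB 0] at h; exact h
  have hre2 : ∀ σ, r0 σ e2 = e2 := fun σ => by
    have h := hr0 σ 1; rw [hB 1] at h; exact h
  have hru : ∀ σ (i : ZMod 3), r0 σ (u i) = wv k u σ i := by
    intro σ i
    induction i using zmod3_cases with
    | h0 => rw [show u 0 = B 2 from (hB 2).symm]; exact hr0 σ 2
    | h1 => rw [show u 1 = B 3 from (hB 3).symm]; exact hr0 σ 3
    | h2 => rw [show u 2 = B 4 from (hB 4).symm]; exact hr0 σ 4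
  have hrv : ∀ σ (i : ZMod 3), r0 σ (v i) = wv k v σ i := by
    intro σ i
    induction i using zmod3_cases with
    | h0 => rw [show v 0 = B 5 from (hB 5).symm]; exact hr0 σ 5
    | h1 => rw [show v 1 = B 6 from (hB 6).symm]; exact hr0 σ 6
    | h2 => rw [show v 2 = B 7 from (hB 7).symm]; exact hr0 σ 7
  have hcu : ∀ σ σ' (i : ZMod 3), r0 σ (r0 σ' (u i)) = r0 (σ * σ') (u i) := by
    intro σ σ' i
    rw [hru σ', hru (σ * σ')]
    exact wv_comp k hk4 u σ σ' (r0 σ) (hru σ) i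
  have hcv : ∀ σ σ' (i : ZMod 3), r0 σ (r0 σ' (v i)) = r0 (σ * σ') (v i) := by
    intro σ σ' i
    rw [hrv σ', hrv (σ * σ')]
    exact wv_comp k hk4 v σ σ' (r0 σ) (hrv σ) i
  have hcomp : ∀ σ σ', (r0 σ).comp (r0 σ') = r0 (σ * σ') := by
    intro σ σ'
    refine B.ext (fin8_cases _ ?_ ?_ ?_ ?_ ?_ ?_ ?_ ?_)
    · rw [hB 0]
      show r0 σ (r0 σ' e1) = r0 (σ * σ') e1
      rw [hre1 σ', hre1 σ, hre1 (σ * σ')]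
    · rw [hB 1]
      show r0 σ (r0 σ' e2) = r0 (σ * σ') e2
      rw [hre2 σ', hre2 σ, hre2 (σ * σ')]
    · rw [hB 2]
      show r0 σ (r0 σ' (u 0)) = r0 (σ * σ') (u 0)
      exact hcu σ σ' 0
    · rw [hB 3]
      show r0 σ (r0 σ' (u 1)) = r0 (σ * σ') (u 1)
      exact hcu σ σ' 1
    · rw [hB 4]
      show r0 σ (r0 σ' (u 2)) = r0 (σ * σ') (u 2)
      exact hcu σ σ' 2
    · rw [hB 5]
      show r0 σ (r0 σ' (v 0)) = r0 (σ * σ') (v 0)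
      exact hcv σ σ' 0
    · rw [hB 6]
      show r0 σ (r0 σ' (v 1)) = r0 (σ * σ') (v 1)
      exact hcv σ σ' 1
    · rw [hB 7]
      show r0 σ (r0 σ' (v 2)) = r0 (σ * σ') (v 2)
      exact hcv σ σ' 2
  have hone : r0 1 = LinearMap.id := by
    refine B.ext (fin8_cases _ ?_ ?_ ?_ ?_ ?_ ?_ ?_ ?_)
    · rw [hB 0]; exact hre1 1
    · rw [hB 1]; exact hre2 1
    · rw [hB 2]
      show r0 1 (u 0) = u 0
      rw [hru]; exact wv_one k hk4 u 0
    · rw [hB 3]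
      show r0 1 (u 1) = u 1
      rw [hru]; exact wv_one k hk4 u 1
    · rw [hB 4]
      show r0 1 (u 2) = u 2
      rw [hru]; exact wv_one k hk4 u 2
    · rw [hB 5]
      show r0 1 (v 0) = v 0
      rw [hrv]; exact wv_one k hk4 v 0
    · rw [hB 6]
      show r0 1 (v 1) = v 1
      rw [hrv]; exact wv_one k hk4 v 1
    · rw [hB 7]
      show r0 1 (v 2) = v 2
      rw [hrv]; exact wv_one k hk4 v 2
  let ρfun : Equiv.Perm (Fin 4) → (C ≃ₗ[k] C) := fun σ =>
    LinearEquiv.ofLinear (r0 σ) (r0 σ⁻¹)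
      (by rw [hcomp, mul_inv_cancel]; exact hone)
      (by rw [hcomp, inv_mul_cancel]; exact hone)
  let ρ : Equiv.Perm (Fin 4) →* (C ≃ₗ[k] C) :=
    { toFun := ρfun
      map_one' := by
        apply LinearEquiv.toLinearMap_injective
        ext x
        show r0 1 x = x
        rw [hone]; rfl
      map_mul' := by
        intro σ σ'
        apply LinearEquiv.toLinearMap_injective
        ext x
        show r0 (σ * σ') x = r0 σ (r0 σ' x)
        exact (LinearMap.congr_fun (hcomp σ σ') x).symm }
  have pu01 : u 0 * u 1 = v 2 := by
    have h := huu 0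
    rwa [show (0:ZMod 3)+1 = 1 from by decide, show (0:ZMod 3)+2 = 2 from by decide] at h
  have pu10 : u 1 * u 0 = - v 2 := by
    have h := huu' 0
    rwa [show (0:ZMod 3)+1 = 1 from by decide, show (0:ZMod 3)+2 = 2 from by decide] at h
  have pv01 : v 0 * v 1 = u 2 := by
    have h := hvv 0
    rwa [show (0:ZMod 3)+1 = 1 from by decide, show (0:ZMod 3)+2 = 2 from by decide] at h
  have pv10 : v 1 * v 0 = - u 2 := by
    have h := hvv' 0
    rwa [show (0:ZMod 3)+1 = 1 from by decide, show (0:ZMod 3)+2 = 2 from by decide] at h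
  have pu12 : u 1 * u 2 = v 0 := by
    have h := huu 1
    rwa [show (1:ZMod 3)+1 = 2 from by decide, show (1:ZMod 3)+2 = 0 from by decide] at h
  have pu21 : u 2 * u 1 = - v 0 := by
    have h := huu' 1
    rwa [show (1:ZMod 3)+1 = 2 from by decide, show (1:ZMod 3)+2 = 0 from by decide] at h
  have pv12 : v 1 * v 2 = u 0 := by
    have h := hvv 1
    rwa [show (1:ZMod 3)+1 = 2 from by decide, show (1:ZMod 3)+2 = 0 from by decide] at h
  have pv21 : v 2 * v 1 = - u 0 := by
    have h := hvv' 1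
    rwa [show (1:ZMod 3)+1 = 2 from by decide, show (1:ZMod 3)+2 = 0 from by decide] at h
  have pu20 : u 2 * u 0 = v 1 := by
    have h := huu 2
    rwa [show (2:ZMod 3)+1 = 0 from by decide, show (2:ZMod 3)+2 = 1 from by decide] at h
  have pu02 : u 0 * u 2 = - v 1 := by
    have h := huu' 2
    rwa [show (2:ZMod 3)+1 = 0 from by decide, show (2:ZMod 3)+2 = 1 from by decide] at h
  have pv20 : v 2 * v 0 = u 1 := by
    have h := hvv 2
    rwa [show (2:ZMod 3)+1 = 0 from by decide, show (2:ZMod 3)+2 = 1 from by decide] at h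
  have pv02 : v 0 * v 2 = - u 1 := by
    have h := hvv' 2
    rwa [show (2:ZMod 3)+1 = 0 from by decide, show (2:ZMod 3)+2 = 1 from by decide] at h
  have puv00 : u 0 * v 0 = - e1 := by have h := huv 0 0; rwa [if_pos rfl] at h
  have pvu00 : v 0 * u 0 = - e2 := by have h := hvu 0 0; rwa [if_pos rfl] at h
  have puv01 : u 0 * v 1 = 0 := by have h := huv 0 1; rwa [if_neg (by decide)] at h
  have pvu01 : v 0 * u 1 = 0 := by have h := hvu 0 1; rwa [if_neg (by decide)] at h
  have puv02 : u 0 * v 2 = 0 := by have h := huv 0 2; rwa [if_neg (by decide)] at h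
  have pvu02 : v 0 * u 2 = 0 := by have h := hvu 0 2; rwa [if_neg (by decide)] at h
  have puv10 : u 1 * v 0 = 0 := by have h := huv 1 0; rwa [if_neg (by decide)] at h
  have pvu10 : v 1 * u 0 = 0 := by have h := hvu 1 0; rwa [if_neg (by decide)] at h
  have puv11 : u 1 * v 1 = - e1 := by have h := huv 1 1; rwa [if_pos rfl] at h
  have pvu11 : v 1 * u 1 = - e2 := by have h := hvu 1 1; rwa [if_pos rfl] at h
  have puv12 : u 1 * v 2 = 0 := by have h := huv 1 2; rwa [if_neg (by decide)] at h
  have pvu12 : v 1 * u 2 = 0 := by have h := hvu 1 2; rwa [if_neg (by decide)] at h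
  have puv20 : u 2 * v 0 = 0 := by have h := huv 2 0; rwa [if_neg (by decide)] at h
  have pvu20 : v 2 * u 0 = 0 := by have h := hvu 2 0; rwa [if_neg (by decide)] at h
  have puv21 : u 2 * v 1 = 0 := by have h := huv 2 1; rwa [if_neg (by decide)] at h
  have pvu21 : v 2 * u 1 = 0 := by have h := hvu 2 1; rwa [if_neg (by decide)] at h
  have puv22 : u 2 * v 2 = - e1 := by have h := huv 2 2; rwa [if_pos rfl] at h
  have pvu22 : v 2 * u 2 = - e2 := by have h := hvu 2 2; rwa [if_pos rfl] at h
  have w0 : (![e1, e2, u 0, u 1, u 2, v 0, v 1, v 2] : Fin 8 → C) 0 = e1 := rfl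
  have w1 : (![e1, e2, u 0, u 1, u 2, v 0, v 1, v 2] : Fin 8 → C) 1 = e2 := rfl
  have w2 : (![e1, e2, u 0, u 1, u 2, v 0, v 1, v 2] : Fin 8 → C) 2 = u 0 := rfl
  have w3 : (![e1, e2, u 0, u 1, u 2, v 0, v 1, v 2] : Fin 8 → C) 3 = u 1 := rfl
  have w4 : (![e1, e2, u 0, u 1, u 2, v 0, v 1, v 2] : Fin 8 → C) 4 = u 2 := rfl
  have w5 : (![e1, e2, u 0, u 1, u 2, v 0, v 1, v 2] : Fin 8 → C) 5 = v 0 := rfl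
  have w6 : (![e1, e2, u 0, u 1, u 2, v 0, v 1, v 2] : Fin 8 → C) 6 = v 1 := rfl
  have w7 : (![e1, e2, u 0, u 1, u 2, v 0, v 1, v 2] : Fin 8 → C) 7 = v 2 := rfl
  have Vt1u0 : r0 (Equiv.swap (0:Fin 4) 1 * Equiv.swap 2 3) (u 0) = u 0 := by
    rw [hru]
    refine wv_eval k hk4 u _ 0 1 (sg_eq_one (by decide)) 1 0 3 2
      (by decide) (by decide) (by decide) (by decide) _ ?_
    simp (config := { decide := true }) [Pv_expand, cf]
    module
  have Vt1u1 : r0 (Equiv.swap (0:Fin 4) 1 * Equiv.swap 2 3) (u 1) = - u 1 := by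
    rw [hru]
    refine wv_eval k hk4 u _ 1 1 (sg_eq_one (by decide)) 1 0 3 2
      (by decide) (by decide) (by decide) (by decide) _ ?_
    simp (config := { decide := true }) [Pv_expand, cf]
    module
  have Vt1u2 : r0 (Equiv.swap (0:Fin 4) 1 * Equiv.swap 2 3) (u 2) = - u 2 := by
    rw [hru]
    refine wv_eval k hk4 u _ 2 1 (sg_eq_one (by decide)) 1 0 3 2
      (by decide) (by decide) (by decide) (by decide) _ ?_
    simp (config := { decide := true }) [Pv_expand, cf]
    module
  have Vt1v0 : r0 (Equiv.swap (0:Fin 4) 1 * Equiv.swap 2 3) (v 0) = v 0 := by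
    rw [hrv]
    refine wv_eval k hk4 v _ 0 1 (sg_eq_one (by decide)) 1 0 3 2
      (by decide) (by decide) (by decide) (by decide) _ ?_
    simp (config := { decide := true }) [Pv_expand, cf]
    module
  have Vt1v1 : r0 (Equiv.swap (0:Fin 4) 1 * Equiv.swap 2 3) (v 1) = - v 1 := by
    rw [hrv]
    refine wv_eval k hk4 v _ 1 1 (sg_eq_one (by decide)) 1 0 3 2
      (by decide) (by decide) (by decide) (by decide) _ ?_
    simp (config := { decide := true }) [Pv_expand, cf]
    module
  have Vt1v2 : r0 (Equiv.swap (0:Fin 4) 1 * Equiv.swap 2 3) (v 2) = - v 2 := by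
    rw [hrv]
    refine wv_eval k hk4 v _ 2 1 (sg_eq_one (by decide)) 1 0 3 2
      (by decide) (by decide) (by decide) (by decide) _ ?_
    simp (config := { decide := true }) [Pv_expand, cf]
    module
  have Vt2u0 : r0 (Equiv.swap (1:Fin 4) 2 * Equiv.swap 0 3) (u 0) = - u 0 := by
    rw [hru]
    refine wv_eval k hk4 u _ 0 1 (sg_eq_one (by decide)) 3 2 1 0
      (by decide) (by decide) (by decide) (by decide) _ ?_
    simp (config := { decide := true }) [Pv_expand, cf]
    module
  have Vt2u1 : r0 (Equiv.swap (1:Fin 4) 2 * Equiv.swap 0 3) (u 1) = u 1 := by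
    rw [hru]
    refine wv_eval k hk4 u _ 1 1 (sg_eq_one (by decide)) 3 2 1 0
      (by decide) (by decide) (by decide) (by decide) _ ?_
    simp (config := { decide := true }) [Pv_expand, cf]
    module
  have Vt2u2 : r0 (Equiv.swap (1:Fin 4) 2 * Equiv.swap 0 3) (u 2) = - u 2 := by
    rw [hru]
    refine wv_eval k hk4 u _ 2 1 (sg_eq_one (by decide)) 3 2 1 0
      (by decide) (by decide) (by decide) (by decide) _ ?_
    simp (config := { decide := true }) [Pv_expand, cf]
    module
  have Vt2v0 : r0 (Equiv.swap (1:Fin 4) 2 * Equiv.swap 0 3) (v 0) = - v 0 := by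
    rw [hrv]
    refine wv_eval k hk4 v _ 0 1 (sg_eq_one (by decide)) 3 2 1 0
      (by decide) (by decide) (by decide) (by decide) _ ?_
    simp (config := { decide := true }) [Pv_expand, cf]
    module
  have Vt2v1 : r0 (Equiv.swap (1:Fin 4) 2 * Equiv.swap 0 3) (v 1) = v 1 := by
    rw [hrv]
    refine wv_eval k hk4 v _ 1 1 (sg_eq_one (by decide)) 3 2 1 0
      (by decide) (by decide) (by decide) (by decide) _ ?_
    simp (config := { decide := true }) [Pv_expand, cf]
    module
  have Vt2v2 : r0 (Equiv.swap (1:Fin 4) 2 * Equiv.swap 0 3) (v 2) = - v 2 := by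
    rw [hrv]
    refine wv_eval k hk4 v _ 2 1 (sg_eq_one (by decide)) 3 2 1 0
      (by decide) (by decide) (by decide) (by decide) _ ?_
    simp (config := { decide := true }) [Pv_expand, cf]
    module
  have Vgfu0 : r0 (Equiv.swap (0:Fin 4) 2 * Equiv.swap 0 1) (u 0) = u 1 := by
    rw [hru]
    refine wv_eval k hk4 u _ 0 1 (sg_eq_one (by decide)) 1 2 0 3
      (by decide) (by decide) (by decide) (by decide) _ ?_
    simp (config := { decide := true }) [Pv_expand, cf]
    module
  have Vgfu1 : r0 (Equiv.swap (0:Fin 4) 2 * Equiv.swap 0 1) (u 1) = u 2 := by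
    rw [hru]
    refine wv_eval k hk4 u _ 1 1 (sg_eq_one (by decide)) 1 2 0 3
      (by decide) (by decide) (by decide) (by decide) _ ?_
    simp (config := { decide := true }) [Pv_expand, cf]
    module
  have Vgfu2 : r0 (Equiv.swap (0:Fin 4) 2 * Equiv.swap 0 1) (u 2) = u 0 := by
    rw [hru]
    refine wv_eval k hk4 u _ 2 1 (sg_eq_one (by decide)) 1 2 0 3
      (by decide) (by decide) (by decide) (by decide) _ ?_
    simp (config := { decide := true }) [Pv_expand, cf]
    module
  have Vgfv0 : r0 (Equiv.swap (0:Fin 4) 2 * Equiv.swap 0 1) (v 0) = v 1 := by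
    rw [hrv]
    refine wv_eval k hk4 v _ 0 1 (sg_eq_one (by decide)) 1 2 0 3
      (by decide) (by decide) (by decide) (by decide) _ ?_
    simp (config := { decide := true }) [Pv_expand, cf]
    module
  have Vgfv1 : r0 (Equiv.swap (0:Fin 4) 2 * Equiv.swap 0 1) (v 1) = v 2 := by
    rw [hrv]
    refine wv_eval k hk4 v _ 1 1 (sg_eq_one (by decide)) 1 2 0 3
      (by decide) (by decide) (by decide) (by decide) _ ?_
    simp (config := { decide := true }) [Pv_expand, cf]
    module
  have Vgfv2 : r0 (Equiv.swap (0:Fin 4) 2 * Equiv.swap 0 1) (v 2) = v 0 := by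
    rw [hrv]
    refine wv_eval k hk4 v _ 2 1 (sg_eq_one (by decide)) 1 2 0 3
      (by decide) (by decide) (by decide) (by decide) _ ?_
    simp (config := { decide := true }) [Pv_expand, cf]
    module
  have Vgtu0 : r0 (Equiv.swap (0:Fin 4) 1) (u 0) = - u 0 := by
    rw [hru]
    refine wv_eval k hk4 u _ 0 (-1) (sg_eq_neg_one (by decide)) 1 0 2 3
      (by decide) (by decide) (by decide) (by decide) _ ?_
    simp (config := { decide := true }) [Pv_expand, cf]
    module
  have Vgtu1 : r0 (Equiv.swap (0:Fin 4) 1) (u 1) = - u 2 := by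
    rw [hru]
    refine wv_eval k hk4 u _ 1 (-1) (sg_eq_neg_one (by decide)) 1 0 2 3
      (by decide) (by decide) (by decide) (by decide) _ ?_
    simp (config := { decide := true }) [Pv_expand, cf]
    module
  have Vgtu2 : r0 (Equiv.swap (0:Fin 4) 1) (u 2) = - u 1 := by
    rw [hru]
    refine wv_eval k hk4 u _ 2 (-1) (sg_eq_neg_one (by decide)) 1 0 2 3
      (by decide) (by decide) (by decide) (by decide) _ ?_
    simp (config := { decide := true }) [Pv_expand, cf]
    module
  have Vgtv0 : r0 (Equiv.swap (0:Fin 4) 1) (v 0) = - v 0 := by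
    rw [hrv]
    refine wv_eval k hk4 v _ 0 (-1) (sg_eq_neg_one (by decide)) 1 0 2 3
      (by decide) (by decide) (by decide) (by decide) _ ?_
    simp (config := { decide := true }) [Pv_expand, cf]
    module
  have Vgtv1 : r0 (Equiv.swap (0:Fin 4) 1) (v 1) = - v 2 := by
    rw [hrv]
    refine wv_eval k hk4 v _ 1 (-1) (sg_eq_neg_one (by decide)) 1 0 2 3
      (by decide) (by decide) (by decide) (by decide) _ ?_
    simp (config := { decide := true }) [Pv_expand, cf]
    module
  have Vgtv2 : r0 (Equiv.swap (0:Fin 4) 1) (v 2) = - v 1 := by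
    rw [hrv]
    refine wv_eval k hk4 v _ 2 (-1) (sg_eq_neg_one (by decide)) 1 0 2 3
      (by decide) (by decide) (by decide) (by decide) _ ?_
    simp (config := { decide := true }) [Pv_expand, cf]
    module
  have Mt1 : ∀ a b : C, r0 (Equiv.swap (0:Fin 4) 1 * Equiv.swap 2 3) (a * b) = r0 (Equiv.swap (0:Fin 4) 1 * Equiv.swap 2 3) a * r0 (Equiv.swap (0:Fin 4) 1 * Equiv.swap 2 3) b := by
    refine mul_ext (r0 (Equiv.swap (0:Fin 4) 1 * Equiv.swap 2 3)) ![e1, e2, u 0, u 1, u 2, v 0, v 1, v 2] hspan ?_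
    refine fin8_cases _ ?_ ?_ ?_ ?_ ?_ ?_ ?_ ?_ <;>
      refine fin8_cases _ ?_ ?_ ?_ ?_ ?_ ?_ ?_ ?_ <;>
      simp [w0, w1, w2, w3, w4, w5, w6, w7, he1, he2, he12, he21, he1u, hue2, he2v, hve1, he2u, hue1, he1v, hve2, husq, hvsq, pu01, pu12, pu20, pu10, pu21, pu02, pv01, pv12, pv20, pv10, pv21, pv02, puv00, puv01, puv02, puv10, puv11, puv12, puv20, puv21, puv22, pvu00, pvu01, pvu02, pvu10, pvu11, pvu12, pvu20, pvu21, pvu22, hre1, hre2, map_zero, map_neg, neg_mul, mul_neg, neg_neg, Vt1u0, Vt1u1, Vt1u2, Vt1v0, Vt1v1, Vt1v2]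
  have Mt2 : ∀ a b : C, r0 (Equiv.swap (1:Fin 4) 2 * Equiv.swap 0 3) (a * b) = r0 (Equiv.swap (1:Fin 4) 2 * Equiv.swap 0 3) a * r0 (Equiv.swap (1:Fin 4) 2 * Equiv.swap 0 3) b := by
    refine mul_ext (r0 (Equiv.swap (1:Fin 4) 2 * Equiv.swap 0 3)) ![e1, e2, u 0, u 1, u 2, v 0, v 1, v 2] hspan ?_
    refine fin8_cases _ ?_ ?_ ?_ ?_ ?_ ?_ ?_ ?_ <;>
      refine fin8_cases _ ?_ ?_ ?_ ?_ ?_ ?_ ?_ ?_ <;>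
      simp [w0, w1, w2, w3, w4, w5, w6, w7, he1, he2, he12, he21, he1u, hue2, he2v, hve1, he2u, hue1, he1v, hve2, husq, hvsq, pu01, pu12, pu20, pu10, pu21, pu02, pv01, pv12, pv20, pv10, pv21, pv02, puv00, puv01, puv02, puv10, puv11, puv12, puv20, puv21, puv22, pvu00, pvu01, pvu02, pvu10, pvu11, pvu12, pvu20, pvu21, pvu22, hre1, hre2, map_zero, map_neg, neg_mul, mul_neg, neg_neg, Vt2u0, Vt2u1, Vt2u2, Vt2v0, Vt2v1, Vt2v2]
  have Mgf : ∀ a b : C, r0 (Equiv.swap (0:Fin 4) 2 * Equiv.swap 0 1) (a * b) = r0 (Equiv.swap (0:Fin 4) 2 * Equiv.swap 0 1) a * r0 (Equiv.swap (0:Fin 4) 2 * Equiv.swap 0 1) b := by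
    refine mul_ext (r0 (Equiv.swap (0:Fin 4) 2 * Equiv.swap 0 1)) ![e1, e2, u 0, u 1, u 2, v 0, v 1, v 2] hspan ?_
    refine fin8_cases _ ?_ ?_ ?_ ?_ ?_ ?_ ?_ ?_ <;>
      refine fin8_cases _ ?_ ?_ ?_ ?_ ?_ ?_ ?_ ?_ <;>
      simp [w0, w1, w2, w3, w4, w5, w6, w7, he1, he2, he12, he21, he1u, hue2, he2v, hve1, he2u, hue1, he1v, hve2, husq, hvsq, pu01, pu12, pu20, pu10, pu21, pu02, pv01, pv12, pv20, pv10, pv21, pv02, puv00, puv01, puv02, puv10, puv11, puv12, puv20, puv21, puv22, pvu00, pvu01, pvu02, pvu10, pvu11, pvu12, pvu20, pvu21, pvu22, hre1, hre2, map_zero, map_neg, neg_mul, mul_neg, neg_neg, Vgfu0, Vgfu1, Vgfu2, Vgfv0, Vgfv1, Vgfv2]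
  have Mgt : ∀ a b : C, r0 (Equiv.swap (0:Fin 4) 1) (a * b) = r0 (Equiv.swap (0:Fin 4) 1) a * r0 (Equiv.swap (0:Fin 4) 1) b := by
    refine mul_ext (r0 (Equiv.swap (0:Fin 4) 1)) ![e1, e2, u 0, u 1, u 2, v 0, v 1, v 2] hspan ?_
    refine fin8_cases _ ?_ ?_ ?_ ?_ ?_ ?_ ?_ ?_ <;>
      refine fin8_cases _ ?_ ?_ ?_ ?_ ?_ ?_ ?_ ?_ <;>
      simp [w0, w1, w2, w3, w4, w5, w6, w7, he1, he2, he12, he21, he1u, hue2, he2v, hve1, he2u, hue1, he1v, hve2, husq, hvsq, pu01, pu12, pu20, pu10, pu21, pu02, pv01, pv12, pv20, pv10, pv21, pv02, puv00, puv01, puv02, puv10, puv11, puv12, puv20, puv21, puv22, pvu00, pvu01, pvu02, pvu10, pvu11, pvu12, pvu20, pvu21, pvu22, hre1, hre2, map_zero, map_neg, neg_mul, mul_neg, neg_neg, Vgtu0, Vgtu1, Vgtu2, Vgtv0, Vgtv1, Vgtv2]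
  let S : Subgroup (Equiv.Perm (Fin 4)) :=
    { carrier := {σ | ∀ a b : C, r0 σ (a * b) = r0 σ a * r0 σ b}
      one_mem' := by
        intro a b
        show r0 1 (a * b) = r0 1 a * r0 1 b
        rw [hone]; rfl
      mul_mem' := by
        intro σ σ' hσ hσ' a b
        have hpt : ∀ x, r0 σ (r0 σ' x) = r0 (σ * σ') x :=
          fun x => LinearMap.congr_fun (hcomp σ σ') x
        show r0 (σ * σ') (a * b) = r0 (σ * σ') a * r0 (σ * σ') b
        calc r0 (σ * σ') (a * b) = r0 σ (r0 σ' (a * b)) := (hpt (a * b)).symm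
          _ = r0 σ (r0 σ' a * r0 σ' b) := by rw [hσ' a b]
          _ = r0 σ (r0 σ' a) * r0 σ (r0 σ' b) := hσ _ _
          _ = r0 (σ * σ') a * r0 (σ * σ') b := by rw [hpt, hpt]
      inv_mem' := by
        intro σ hσ a b
        have hpt : ∀ x, r0 σ (r0 σ⁻¹ x) = x := by
          intro x
          have h := LinearMap.congr_fun (hcomp σ σ⁻¹) x
          rw [mul_inv_cancel, hone] at h
          exact h
        have hpt' : ∀ x, r0 σ⁻¹ (r0 σ x) = x := by
          intro x
          have h := LinearMap.congr_fun (hcomp σ⁻¹ σ) x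
          rw [inv_mul_cancel, hone] at h
          exact h
        have hinj : Function.Injective (r0 σ) := Function.LeftInverse.injective hpt'
        show r0 σ⁻¹ (a * b) = r0 σ⁻¹ a * r0 σ⁻¹ b
        apply hinj
        rw [hpt, hσ (r0 σ⁻¹ a) (r0 σ⁻¹ b), hpt, hpt] }
  have hSg1 : (Equiv.swap (0:Fin 4) 1 * Equiv.swap 2 3) ∈ S := Mt1
  have hSg2 : (Equiv.swap (1:Fin 4) 2 * Equiv.swap 0 3) ∈ S := Mt2
  have hSgf : (Equiv.swap (0:Fin 4) 2 * Equiv.swap 0 1) ∈ S := Mgf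
  have hSgt : (Equiv.swap (0:Fin 4) 1) ∈ S := Mgt
  have h01 : Equiv.swap (0:Fin 4) 1 ∈ S := hSgt
  have h12 : Equiv.swap (1:Fin 4) 2 ∈ S := by
    rw [show Equiv.swap (1:Fin 4) 2 = (Equiv.swap (0:Fin 4) 2 * Equiv.swap 0 1) * ((Equiv.swap (0:Fin 4) 1) * (Equiv.swap (0:Fin 4) 2 * Equiv.swap 0 1)⁻¹) from by decide]
    exact S.mul_mem hSgf (S.mul_mem hSgt (S.inv_mem hSgf))
  have h02 : Equiv.swap (0:Fin 4) 2 ∈ S := by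
    rw [show Equiv.swap (0:Fin 4) 2 = (Equiv.swap (0:Fin 4) 2 * Equiv.swap 0 1)⁻¹ * ((Equiv.swap (0:Fin 4) 1) * (Equiv.swap (0:Fin 4) 2 * Equiv.swap 0 1)) from by decide]
    exact S.mul_mem (S.inv_mem hSgf) (S.mul_mem hSgt hSgf)
  have h23 : Equiv.swap (2:Fin 4) 3 ∈ S := by
    rw [show Equiv.swap (2:Fin 4) 3 = (Equiv.swap (0:Fin 4) 1 * Equiv.swap 2 3) * (Equiv.swap (0:Fin 4) 1) from by decide]
    exact S.mul_mem hSg1 hSgt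
  have h03 : Equiv.swap (0:Fin 4) 3 ∈ S := by
    rw [show Equiv.swap (0:Fin 4) 3 = (Equiv.swap (1:Fin 4) 2 * Equiv.swap 0 3) * Equiv.swap 1 2 from by decide]
    exact S.mul_mem hSg2 h12
  have h13 : Equiv.swap (1:Fin 4) 3 ∈ S := by
    rw [show Equiv.swap (1:Fin 4) 3 = (Equiv.swap (0:Fin 4) 1) * (Equiv.swap (0:Fin 4) 3 * (Equiv.swap (0:Fin 4) 1)) from by decide]
    exact S.mul_mem hSgt (S.mul_mem h03 hSgt)
  have hswap : ∀ (x y : Fin 4), x ≠ y → Equiv.swap x y ∈ S := by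
    intro x y hxy
    fin_cases x <;> fin_cases y
    · exact absurd rfl hxy
    · exact h01
    · exact h02
    · exact h03
    · rw [Equiv.swap_comm]; exact h01
    · exact absurd rfl hxy
    · exact h12
    · exact h13
    · rw [Equiv.swap_comm]; exact h02
    · rw [Equiv.swap_comm]; exact h12
    · exact absurd rfl hxy
    · exact h23
    · rw [Equiv.swap_comm]; exact h03
    · rw [Equiv.swap_comm]; exact h13
    · rw [Equiv.swap_comm]; exact h23
    · exact absurd rfl hxy
  have hallS : ∀ σ : Equiv.Perm (Fin 4), ∀ a b : C, r0 σ (a * b) = r0 σ a * r0 σ b := by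
    intro σ
    have hc : Subgroup.closure {τ : Equiv.Perm (Fin 4) | τ.IsSwap} ≤ S :=
      (Subgroup.closure_le S).mpr (by rintro τ ⟨x, y, hxy, rfl⟩; exact hswap x y hxy)
    exact hc (by rw [Equiv.Perm.closure_isSwap]; exact Subgroup.mem_top σ)
  refine ⟨ρ, ?_, ?_, ⟨?_, ?_, ?_, ?_, ?_, ?_⟩, ⟨?_, ?_, ?_, ?_, ?_, ?_⟩, ?_, ⟨?_, ?_, ?_, ?_, ?_, ?_⟩⟩
  · intro σ a b
    exact hallS σ a b
  · intro σ
    exact ⟨hre1 σ, hre2 σ⟩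
  · exact Vt1u0
  · exact Vt1u1
  · exact Vt1u2
  · exact Vt1v0
  · exact Vt1v1
  · exact Vt1v2
  · exact Vt2u0
  · exact Vt2u1
  · exact Vt2u2
  · exact Vt2v0
  · exact Vt2v1
  · exact Vt2v2
  · intro i
    induction i using zmod3_cases with
    | h0 =>
      refine ⟨?_, ?_⟩
      · rw [show (0:ZMod 3)+1 = 1 from by decide]; exact Vgfu0
      · rw [show (0:ZMod 3)+1 = 1 from by decide]; exact Vgfv0
    | h1 =>
      refine ⟨?_, ?_⟩
      · rw [show (1:ZMod 3)+1 = 2 from by decide]; exact Vgfu1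
      · rw [show (1:ZMod 3)+1 = 2 from by decide]; exact Vgfv1
    | h2 =>
      refine ⟨?_, ?_⟩
      · rw [show (2:ZMod 3)+1 = 0 from by decide]; exact Vgfu2
      · rw [show (2:ZMod 3)+1 = 0 from by decide]; exact Vgfv2
  · exact Vgtu0
  · exact Vgtu1
  · exact Vgtu2
  · exact Vgtv0
  · exact Vgtv1
  · exact Vgtv2
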